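/- With the setup of the low-temperature regime (β > 1, m = tanh(βm), μ_{±1} as above), one has μ₁ > μ₋₁, and consequently 1 − βα₀ ≥ 1 − β(1 − m²) > 0, where α₀ = (1 − m²)(1 − (μ₁ − μ₋₁)/2). -/

import Mathlib

open MeasureTheory
open scoped RealInnerProductSpace ENNReal

/-- The multivariate Gaussian measure `N_d(μ, I_d)` on `ℝ^d`. -/
noncomputable def gaussian (d : ℕ) (μ : EuclideanSpace ℝ (Fin d)) :
    Measure (EuclideanSpace ℝ (Fin d)) :=
  volume.withDensity
    (fun x => ENNReal.ofReal ((2 * Real.pi) ^ (-(d : ℝ) / 2) * Real.exp (-‖x - μ‖ ^ 2 / 2)))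

/-- The asymmetric two-component Gaussian mixture
`P_{θ₀} = ((1+m)/2) N_d(θ₀, I_d) + ((1−m)/2) N_d(−θ₀, I_d)`. -/
noncomputable def asymMix (d : ℕ) (θ₀ : EuclideanSpace ℝ (Fin d)) (m : ℝ) :
    Measure (EuclideanSpace ℝ (Fin d)) :=
  ENNReal.ofReal ((1 + m) / 2) • gaussian d θ₀ + ENNReal.ofReal ((1 - m) / 2) • gaussian d (-θ₀)

/-- `tanh` is strictly increasing. -/
lemma tanh_lt_tanh_of_lt {a b : ℝ} (h : a < b) : Real.tanh a < Real.tanh b := by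
  rw [Real.tanh_eq_sinh_div_cosh, Real.tanh_eq_sinh_div_cosh,
    div_lt_div_iff₀ (Real.cosh_pos a) (Real.cosh_pos b)]
  have h1 : 0 < Real.sinh (b - a) := Real.sinh_pos_iff.2 (by linarith)
  rw [Real.sinh_sub] at h1
  nlinarith

/-- `|tanh x| < 1`. -/
lemma abs_tanh_lt_one (x : ℝ) : |Real.tanh x| < 1 := by
  have h1 := Real.cosh_pos x
  have h2 : |Real.sinh x| < Real.cosh x := by
    rw [abs_lt, Real.sinh_eq, Real.cosh_eq]
    constructor <;> nlinarith [Real.exp_pos x, Real.exp_pos (-x)]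
  rw [Real.tanh_eq_sinh_div_cosh, abs_div, abs_of_pos h1, div_lt_one h1]
  exact h2

/-- At the positive fixed point of `m = tanh(βm)` with `β > 1`, one has `β(1 - m²) < 1`. -/
lemma one_sub_beta_pos {β m : ℝ} (hβ : 1 < β) (hm : 0 < m) (hfix : m = Real.tanh (β * m)) :
    0 < 1 - β * (1 - m ^ 2) := by
  set t := β * m with ht
  have htpos : 0 < t := mul_pos (by linarith) hm
  have hs : 2 * t < Real.sinh (2 * t) := Real.self_lt_sinh_iff.2 (by linarith)
  rw [Real.sinh_two_mul] at hs
  have hc := Real.cosh_pos t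
  have hsinh : Real.sinh t = m * Real.cosh t := by
    rw [hfix, Real.tanh_eq_sinh_div_cosh]; field_simp
  have hid := Real.cosh_sq_sub_sinh_sq t
  have hβc : β < Real.cosh t ^ 2 := by nlinarith
  have hs2 : Real.sinh t ^ 2 = m ^ 2 * Real.cosh t ^ 2 := by rw [hsinh]; ring
  have hcosh1 : Real.cosh t ^ 2 * (1 - m ^ 2) = 1 := by linear_combination hid + hs2
  have h1m : 0 < 1 - m ^ 2 := by nlinarith
  nlinarith [mul_lt_mul_of_pos_right hβc h1m]

/-- Integral against the Gaussian measure as a Lebesgue integral of the translated integrand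
against the centered Gaussian density. -/
lemma gaussian_integral_eq (d : ℕ) (μ : EuclideanSpace ℝ (Fin d))
    (f : EuclideanSpace ℝ (Fin d) → ℝ) :
    ∫ x, f x ∂(gaussian d μ)
      = ∫ x, ((2 * Real.pi) ^ (-(d : ℝ) / 2) * Real.exp (-‖x‖ ^ 2 / 2)) * f (x + μ) := by
  rw [gaussian]
  have hmeas : Measurable fun x : EuclideanSpace ℝ (Fin d) =>
      ((2 * Real.pi) ^ (-(d : ℝ) / 2) * Real.exp (-‖x - μ‖ ^ 2 / 2)).toNNReal := by
    fun_prop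
  have heq : (fun x : EuclideanSpace ℝ (Fin d) =>
      ENNReal.ofReal ((2 * Real.pi) ^ (-(d : ℝ) / 2) * Real.exp (-‖x - μ‖ ^ 2 / 2)))
      = fun x => (((2 * Real.pi) ^ (-(d : ℝ) / 2) * Real.exp (-‖x - μ‖ ^ 2 / 2)).toNNReal : ℝ≥0∞) :=
    rfl
  rw [heq, integral_withDensity_eq_integral_smul hmeas f]
  have hρ : ∀ x : EuclideanSpace ℝ (Fin d),
      0 ≤ (2 * Real.pi) ^ (-(d : ℝ) / 2) * Real.exp (-‖x - μ‖ ^ 2 / 2) := fun x => by positivity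
  have h2 : ∀ x : EuclideanSpace ℝ (Fin d),
      ((2 * Real.pi) ^ (-(d : ℝ) / 2) * Real.exp (-‖x - μ‖ ^ 2 / 2)).toNNReal • f x
        = ((2 * Real.pi) ^ (-(d : ℝ) / 2) * Real.exp (-‖x - μ‖ ^ 2 / 2)) * f x := fun x => by
    rw [NNReal.smul_def, Real.coe_toNNReal _ (hρ x), smul_eq_mul]
  simp_rw [h2]
  have htr := integral_add_right_eq_self (μ := (volume : Measure (EuclideanSpace ℝ (Fin d))))
    (fun x => ((2 * Real.pi) ^ (-(d : ℝ) / 2) * Real.exp (-‖x - μ‖ ^ 2 / 2)) * f x) μ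
  rw [← htr]
  simp [add_sub_cancel_right]

/-- The centered Gaussian density is integrable. -/
lemma gaussian_density_integrable (d : ℕ) :
    Integrable (fun x : EuclideanSpace ℝ (Fin d) =>
      (2 * Real.pi) ^ (-(d : ℝ) / 2) * Real.exp (-‖x‖ ^ 2 / 2)) := by
  apply Integrable.const_mul
  have h1 := GaussianFourier.integrable_cexp_neg_mul_sq_norm_add
    (V := EuclideanSpace ℝ (Fin d)) (b := (1/2 : ℂ)) (by norm_num) 0 0
  have h2 := h1.re
  apply h2.congr
  filter_upwards with x
  rw [show (-(1/2 : ℂ) * (‖x‖ : ℂ) ^ 2 + 0 * (⟪(0 : EuclideanSpace ℝ (Fin d)), x⟫ : ℝ))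
      = ((-‖x‖ ^ 2 / 2 : ℝ) : ℂ) by push_cast; ring]
  simp only [RCLike.re_to_complex]
  exact Complex.exp_ofReal_re _

/-- Strict monotonicity of the Gaussian means of `tanh(c + ⟪θ₀, ·⟫)`. -/
lemma mu_lt (d : ℕ) (c : ℝ) (θ₀ : EuclideanSpace ℝ (Fin d)) (hθ : θ₀ ≠ 0) :
    (∫ x, Real.tanh (c + ⟪θ₀, x⟫) ∂(gaussian d (-θ₀)))
      < ∫ x, Real.tanh (c + ⟪θ₀, x⟫) ∂(gaussian d θ₀) := by
  set C : ℝ := (2 * Real.pi) ^ (-(d : ℝ) / 2) with hC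
  have hCpos : 0 < C := by rw [hC]; positivity
  set t : ℝ := ‖θ₀‖ ^ 2 with htdef
  have htpos : 0 < t := by
    rw [htdef]
    have : ‖θ₀‖ ≠ 0 := norm_ne_zero_iff.2 hθ
    positivity
  rw [gaussian_integral_eq, gaussian_integral_eq]
  simp only [inner_add_right, inner_neg_right, real_inner_self_eq_norm_sq]
  have hint : ∀ z : ℝ, Integrable (fun x : EuclideanSpace ℝ (Fin d) =>
      (C * Real.exp (-‖x‖ ^ 2 / 2)) * Real.tanh (c + (⟪θ₀, x⟫ + z))) := by
    intro z
    rw [show (fun x : EuclideanSpace ℝ (Fin d) =>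
        (C * Real.exp (-‖x‖ ^ 2 / 2)) * Real.tanh (c + (⟪θ₀, x⟫ + z)))
        = fun x => Real.tanh (c + (⟪θ₀, x⟫ + z)) * (C * Real.exp (-‖x‖ ^ 2 / 2)) from
      funext fun x => mul_comm _ _]
    apply Integrable.bdd_mul (c := 1) (gaussian_density_integrable d)
    · have htanh : Continuous Real.tanh := by
        rw [show Real.tanh = fun x => Real.sinh x / Real.cosh x from
          funext fun x => Real.tanh_eq_sinh_div_cosh x]
        exact Real.continuous_sinh.div Real.continuous_cosh fun x => (Real.cosh_pos x).ne'
      exact (htanh.comp (continuous_const.add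
        ((continuous_const.inner continuous_id).add continuous_const))).aestronglyMeasurable
    · exact Filter.Eventually.of_forall fun x => by
        simpa [Real.norm_eq_abs] using (abs_tanh_lt_one (c + (⟪θ₀, x⟫ + z))).le
  have hsub : 0 < ∫ x, ((C * Real.exp (-‖x‖ ^ 2 / 2)) * Real.tanh (c + (⟪θ₀, x⟫ + t))
      - (C * Real.exp (-‖x‖ ^ 2 / 2)) * Real.tanh (c + (⟪θ₀, x⟫ + -t))) := by
    have hpos : ∀ x : EuclideanSpace ℝ (Fin d),
        0 < (C * Real.exp (-‖x‖ ^ 2 / 2)) * Real.tanh (c + (⟪θ₀, x⟫ + t))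
          - (C * Real.exp (-‖x‖ ^ 2 / 2)) * Real.tanh (c + (⟪θ₀, x⟫ + -t)) := by
      intro x
      have h1 : 0 < C * Real.exp (-‖x‖ ^ 2 / 2) := by positivity
      have h2 := tanh_lt_tanh_of_lt (show c + (⟪θ₀, x⟫ + -t) < c + (⟪θ₀, x⟫ + t) by linarith)
      nlinarith
    have hintsub := (hint t).sub (hint (-t))
    rw [integral_pos_iff_support_of_nonneg_ae
      (Filter.Eventually.of_forall fun x => (hpos x).le) hintsub]
    have hsupp : Function.support (fun x : EuclideanSpace ℝ (Fin d) =>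
        (C * Real.exp (-‖x‖ ^ 2 / 2)) * Real.tanh (c + (⟪θ₀, x⟫ + t))
          - (C * Real.exp (-‖x‖ ^ 2 / 2)) * Real.tanh (c + (⟪θ₀, x⟫ + -t))) = Set.univ :=
      Set.eq_univ_of_forall fun x => (hpos x).ne'
    rw [hsupp]
    exact isOpen_univ.measure_pos volume Set.univ_nonempty
  rw [integral_sub (hint t) (hint (-t))] at hsub
  linarith

/-- in the low-temperature regime (`β > 1`, `m` the positive root of
`m = tanh(βm)`, `θ₀ ≠ 0`), with `μ_z := E[tanh(βm + θ₀ᵀX) | X ~ N_d(zθ₀, I_d)]`, one has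
`μ₁ > μ₋₁`, and consequently, for `α₀ = (1 − m²)(1 − (μ₁ − μ₋₁)/2)`,
`1 − βα₀ ≥ 1 − β(1 − m²) > 0`. -/
theorem mu_monotone_and_info_pos (d : ℕ) (β m : ℝ) (θ₀ : EuclideanSpace ℝ (Fin d))
    (hθ : θ₀ ≠ 0) (hβ : 1 < β) (hm : 0 < m) (hfix : m = Real.tanh (β * m)) :
    (∫ x, Real.tanh (β * m + ⟪θ₀, x⟫) ∂(gaussian d (-θ₀)))
        < ∫ x, Real.tanh (β * m + ⟪θ₀, x⟫) ∂(gaussian d θ₀) ∧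
    1 - β * (1 - m ^ 2)
        ≤ 1 - β * ((1 - m ^ 2) *
            (1 - ((∫ x, Real.tanh (β * m + ⟪θ₀, x⟫) ∂(gaussian d θ₀))
                  - ∫ x, Real.tanh (β * m + ⟪θ₀, x⟫) ∂(gaussian d (-θ₀))) / 2)) ∧
    0 < 1 - β * (1 - m ^ 2) := by
  have h1 := mu_lt d (β * m) θ₀ hθ
  refine ⟨h1, ?_, one_sub_beta_pos hβ hm hfix⟩
  set D := (∫ x, Real.tanh (β * m + ⟪θ₀, x⟫) ∂(gaussian d θ₀))
      - ∫ x, Real.tanh (β * m + ⟪θ₀, x⟫) ∂(gaussian d (-θ₀)) with hD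
  have hDpos : 0 < D := by rw [hD]; linarith
  have hm1 : m ^ 2 < 1 := by
    have := abs_tanh_lt_one (β * m)
    rw [← hfix, abs_lt] at this
    nlinarith
  nlinarith [mul_nonneg (mul_nonneg (by linarith : (0:ℝ) ≤ β) (by linarith : 0 ≤ 1 - m ^ 2))
    hDpos.le]
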